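/- Let S be a UPB in H₁ ⊗ ... ⊗ Hₙ with projector P_S onto span(S), let ε = min over product unit vectors of ⟨φ, P_S φ⟩ (which is strictly positive), and let C ≥ 0 be any positive operator with c = max over product unit vectors of ⟨φ, C φ⟩ > 0 and Tr(P_S^⊥ C) > 0. Then Ã = P_S − (ε/c) C satisfies Tr(Ã (P₁ ⊗ ... ⊗ Pₙ)) ≥ 0 for all rank-one product projections, while Tr(Ã ρ_UPB) < 0 for ρ_UPB = P_S^⊥ / Tr(P_S^⊥). Hence Ã is an entanglement witness detecting the bound entangled state ρ_UPB. -/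

import Mathlib

open Matrix
open scoped ComplexOrder

noncomputable section

/-- A state: positive semidefinite with trace one. -/
def IsState {n : Type*} [Fintype n] (ρ : Matrix n n ℂ) : Prop :=
  ρ.PosSemidef ∧ ρ.trace = 1

/-- Tensor product of a family of matrices. -/
def famTensor {n : ℕ} {d : Fin n → ℕ} (M : ∀ i, Matrix (Fin (d i)) (Fin (d i)) ℂ) :
    Matrix (∀ i, Fin (d i)) (∀ i, Fin (d i)) ℂ :=
  Matrix.of fun f g => ∏ i, M i (f i) (g i)

/-- Tensor product `φ¹ ⊗ ... ⊗ φⁿ` of a family of vectors. -/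
def productVec {n : ℕ} {d : Fin n → ℕ} (φ : ∀ i, Fin (d i) → ℂ) :
    (∀ i, Fin (d i)) → ℂ :=
  fun f => ∏ i, φ i (f i)

/-- The rank-one operator `|v⟩⟨v|`. -/
def outer {m : Type*} (v : m → ℂ) : Matrix m m ℂ := Matrix.vecMulVec v (star v)

/-- An n-partite separable state: a convex combination of n-fold product states. -/
def SepN {n : ℕ} {d : Fin n → ℕ} (ρ : Matrix (∀ i, Fin (d i)) (∀ i, Fin (d i)) ℂ) : Prop :=
  ∃ (k : ℕ) (p : Fin k → ℝ) (σ : Fin k → ∀ i, Matrix (Fin (d i)) (Fin (d i)) ℂ),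
    (∀ j, 0 ≤ p j) ∧ (∑ j, p j = 1) ∧ (∀ j i, IsState (σ j i)) ∧
    ρ = ∑ j, (p j : ℂ) • famTensor (σ j)

/-- A rank-one (orthogonal) projection `|v⟩⟨v|`, `v` a unit vector. -/
def IsRankOneProj {m : Type*} [Fintype m] (P : Matrix m m ℂ) : Prop :=
  ∃ v : m → ℂ, star v ⬝ᵥ v = 1 ∧ P = Matrix.vecMulVec v (star v)

section Helpers

variable {ι : Type*} [Fintype ι] [DecidableEq ι]

lemma trace_mul_outer (A : Matrix ι ι ℂ) (u : ι → ℂ) :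
    (A * outer u).trace = star u ⬝ᵥ (A *ᵥ u) := by
  simp only [Matrix.trace, Matrix.diag, Matrix.mul_apply, outer, Matrix.vecMulVec_apply,
    dotProduct, Matrix.mulVec, Pi.star_apply, Finset.mul_sum]
  refine Finset.sum_congr rfl fun x _ => Finset.sum_congr rfl fun y _ => by ring

lemma outer_mulVec (u w : ι → ℂ) : outer u *ᵥ w = (star u ⬝ᵥ w) • u := by
  ext x
  simp only [outer, Matrix.mulVec, Matrix.vecMulVec_apply, dotProduct, Pi.star_apply,
    Pi.smul_apply, smul_eq_mul, Finset.sum_mul]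
  exact Finset.sum_congr rfl fun y _ => by ring

lemma star_dot_comm (u w : ι → ℂ) :
    star u ⬝ᵥ w = starRingEnd ℂ (star w ⬝ᵥ u) := by
  simp only [dotProduct, map_sum, _root_.map_mul, Pi.star_apply, RCLike.star_def,
    Complex.conj_conj]
  exact Finset.sum_congr rfl fun x _ => mul_comm _ _

lemma sum_mulVec' {k : ℕ} (M : Fin k → Matrix ι ι ℂ) (u : ι → ℂ) :
    (∑ j, M j) *ᵥ u = ∑ j, M j *ᵥ u := by
  ext x
  simp only [Matrix.mulVec, dotProduct, Matrix.sum_apply, Finset.sum_apply, Finset.sum_mul]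
  rw [Finset.sum_comm]

lemma dot_sum_outer {k : ℕ} (u : ι → ℂ) (w : Fin k → ι → ℂ) :
    star u ⬝ᵥ ((∑ j, outer (w j)) *ᵥ u)
      = ∑ j, (Complex.normSq (star (w j) ⬝ᵥ u) : ℂ) := by
  rw [sum_mulVec']
  rw [show star u ⬝ᵥ ∑ j, outer (w j) *ᵥ u = ∑ j, star u ⬝ᵥ (outer (w j) *ᵥ u) by
    simp [dotProduct, Finset.sum_apply, Finset.mul_sum]; exact Finset.sum_comm]
  refine Finset.sum_congr rfl fun j _ => ?_
  rw [outer_mulVec, dotProduct_smul, star_dot_comm u (w j), smul_eq_mul,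
    Complex.mul_conj]

lemma outer_mul_outer (a b : ι → ℂ) :
    outer a * outer b = (star a ⬝ᵥ b) • Matrix.vecMulVec a (star b) := by
  ext x z
  simp only [outer, Matrix.mul_apply, Matrix.vecMulVec_apply, Pi.star_apply,
    Matrix.smul_apply, dotProduct, smul_eq_mul, Finset.sum_mul]
  exact Finset.sum_congr rfl fun y _ => by ring

lemma outer_hermitian (u : ι → ℂ) : (outer u)ᴴ = outer u := by
  ext x y
  simp only [outer, Matrix.conjTranspose_apply, Matrix.vecMulVec_apply, Pi.star_apply,
    star_mul']
  ring_nf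
  simp

lemma outer_trace (u : ι → ℂ) : (outer u).trace = star u ⬝ᵥ u := by
  simp only [Matrix.trace, Matrix.diag, outer, Matrix.vecMulVec_apply, dotProduct,
    Pi.star_apply]
  exact Finset.sum_congr rfl fun x _ => by ring

lemma trace_conjTranspose_mul_self (A : Matrix ι ι ℂ) :
    (Aᴴ * A).trace = ((∑ i, ∑ j, Complex.normSq (A j i) : ℝ) : ℂ) := by
  push_cast
  simp only [Matrix.trace, Matrix.diag, Matrix.mul_apply, Matrix.conjTranspose_apply,
    RCLike.star_def]
  refine Finset.sum_congr rfl fun x _ => Finset.sum_congr rfl fun y _ => ?_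
  rw [mul_comm, Complex.mul_conj]

lemma productVec_dot {n : ℕ} {d : Fin n → ℕ} (φ ψ : ∀ i, Fin (d i) → ℂ) :
    star (productVec φ) ⬝ᵥ productVec ψ = ∏ i, star (φ i) ⬝ᵥ ψ i := by
  simp only [dotProduct, Pi.star_apply, productVec, RCLike.star_def, map_prod]
  rw [Fintype.prod_sum (fun i j => (starRingEnd ℂ) (φ i j) * ψ i j)]
  exact Finset.sum_congr rfl fun f _ => (Finset.prod_mul_distrib).symm

lemma famTensor_outer {n : ℕ} {d : Fin n → ℕ} (w : ∀ i, Fin (d i) → ℂ) :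
    famTensor (fun i => Matrix.vecMulVec (w i) (star (w i))) = outer (productVec w) := by
  ext f g
  simp only [famTensor, Matrix.of_apply, Matrix.vecMulVec_apply, Pi.star_apply, outer,
    productVec, RCLike.star_def, map_prod]
  rw [Finset.prod_mul_distrib]

end Helpers

/-- `Ã = P_S − (ε/c) C` built from a UPB is an entanglement witness
detecting the bound entangled state `ρ_UPB = P_S^⊥ / Tr(P_S^⊥)`. -/
theorem stmt18 {n m : ℕ} {d : Fin n → ℕ} (hd : ∀ i, 0 < d i)
    (v : Fin m → ∀ i, Fin (d i) → ℂ)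
    (horth : ∀ j k, star (productVec (v j)) ⬝ᵥ productVec (v k)
      = if j = k then 1 else 0)
    (hunext : ∀ φ : ∀ i, Fin (d i) → ℂ, productVec φ ≠ 0 →
      ∃ j, star (productVec (v j)) ⬝ᵥ productVec φ ≠ 0)
    (PS Pperp : Matrix (∀ i, Fin (d i)) (∀ i, Fin (d i)) ℂ)
    (hPS : PS = ∑ j, outer (productVec (v j)))
    (hPperp : Pperp = 1 - PS)
    (C : Matrix (∀ i, Fin (d i)) (∀ i, Fin (d i)) ℂ) (hC : C.PosSemidef)
    (ε c : ℝ)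
    (hε : IsLeast {r : ℝ | ∃ φ : ∀ i, Fin (d i) → ℂ,
      (∀ i, star (φ i) ⬝ᵥ φ i = 1) ∧
      r = (star (productVec φ) ⬝ᵥ (PS *ᵥ productVec φ)).re} ε)
    (hc : IsGreatest {r : ℝ | ∃ φ : ∀ i, Fin (d i) → ℂ,
      (∀ i, star (φ i) ⬝ᵥ φ i = 1) ∧
      r = (star (productVec φ) ⬝ᵥ (C *ᵥ productVec φ)).re} c)
    (hcpos : 0 < c)
    (htr : 0 < ((Pperp * C).trace).re)
    (Atil ρUPB : Matrix (∀ i, Fin (d i)) (∀ i, Fin (d i)) ℂ)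
    (hAtil : Atil = PS - ((ε / c : ℝ) : ℂ) • C)
    (hρ : ρUPB = (Pperp.trace)⁻¹ • Pperp) :
    0 < ε ∧
    (∀ P : ∀ i, Matrix (Fin (d i)) (Fin (d i)) ℂ,
      (∀ i, IsRankOneProj (P i)) → 0 ≤ ((Atil * famTensor P).trace).re) ∧
    ((Atil * ρUPB).trace).re < 0 := by
  classical
  -- PS is an idempotent hermitian projection
  have hproj : PS * PS = PS := by
    rw [hPS, Finset.sum_mul]
    refine Finset.sum_congr rfl fun j _ => ?_
    rw [Finset.mul_sum]
    have : ∀ k, outer (productVec (v j)) * outer (productVec (v k))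
        = (if j = k then (1:ℂ) else 0) • Matrix.vecMulVec (productVec (v j))
            (star (productVec (v k))) := by
      intro k; rw [outer_mul_outer, horth]
    simp only [this, ite_smul, one_smul, zero_smul]
    simp [outer]
  -- positivity of ε
  obtain ⟨⟨φ₀, hφ₀unit, hφ₀val⟩, hlb⟩ := hε
  have hpv0 : productVec φ₀ ≠ 0 := by
    intro h
    have h1 : star (productVec φ₀) ⬝ᵥ productVec φ₀ = 1 := by
      rw [productVec_dot]
      simp [hφ₀unit]
    rw [h] at h1; simp at h1
  obtain ⟨j₀, hj₀⟩ := hunext φ₀ hpv0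
  have hεpos : 0 < ε := by
    rw [hφ₀val, hPS, dot_sum_outer]
    have : ((∑ j, (Complex.normSq (star (productVec (v j)) ⬝ᵥ productVec φ₀) : ℂ))).re
        = ∑ j, Complex.normSq (star (productVec (v j)) ⬝ᵥ productVec φ₀) := by
      rw [← Complex.ofReal_sum]; exact Complex.ofReal_re _
    rw [this]
    have h1 : 0 < Complex.normSq (star (productVec (v j₀)) ⬝ᵥ productVec φ₀) :=
      Complex.normSq_pos.2 hj₀
    have h2 : ∀ j ∈ Finset.univ,
        0 ≤ Complex.normSq (star (productVec (v j)) ⬝ᵥ productVec φ₀) :=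
      fun j _ => Complex.normSq_nonneg _
    exact lt_of_lt_of_le h1 (Finset.single_le_sum h2 (Finset.mem_univ j₀))
  refine ⟨hεpos, ?_, ?_⟩
  · -- witness nonnegative on product projections
    intro P hP
    choose w hw1 hw2 using hP
    have hft : famTensor P = outer (productVec w) := by
      rw [show P = fun i => Matrix.vecMulVec (w i) (star (w i)) from funext hw2]
      exact famTensor_outer w
    rw [hft, trace_mul_outer, hAtil, Matrix.sub_mulVec, dotProduct_sub,
      Matrix.smul_mulVec, dotProduct_smul, smul_eq_mul]
    set u := productVec w
    have hPSlb : ε ≤ (star u ⬝ᵥ (PS *ᵥ u)).re := hlb ⟨w, hw1, rfl⟩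
    have hCub : (star u ⬝ᵥ (C *ᵥ u)).re ≤ c := hc.2 ⟨w, hw1, rfl⟩
    have hCnn : 0 ≤ (star u ⬝ᵥ (C *ᵥ u)).re := by
      have h := hC.dotProduct_mulVec_nonneg u
      have := (Complex.le_def.mp h).1
      simpa using this
    rw [Complex.sub_re, Complex.re_ofReal_mul]
    have hdivnn : 0 ≤ ε / c := div_nonneg hεpos.le hcpos.le
    have : ε / c * (star u ⬝ᵥ (C *ᵥ u)).re ≤ ε / c * c :=
      mul_le_mul_of_nonneg_left hCub hdivnn
    rw [div_mul_cancel₀ ε hcpos.ne'] at this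
    linarith
  · -- negativity on ρUPB
    have hPSH : PSᴴ = PS := by
      rw [hPS, Matrix.conjTranspose_sum]
      exact Finset.sum_congr rfl fun j _ => outer_hermitian _
    have hPperpH : Pperpᴴ = Pperp := by
      rw [hPperp, Matrix.conjTranspose_sub, Matrix.conjTranspose_one, hPSH]
    have hPperp_sq : Pperp * Pperp = Pperp := by
      rw [hPperp, sub_mul, mul_sub, mul_sub, one_mul, mul_one, hproj]
      simp
    set t : ℝ := ∑ f, ∑ g, Complex.normSq (Pperp g f) with ht
    have htrace : Pperp.trace = (t : ℂ) := by
      rw [ht, ← trace_conjTranspose_mul_self Pperp, hPperpH, hPperp_sq]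
    have htnn : 0 ≤ t :=
      Finset.sum_nonneg fun f _ => Finset.sum_nonneg fun g _ => Complex.normSq_nonneg _
    have htpos : 0 < t := by
      rcases htnn.lt_or_eq with h | h
      · exact h
      · exfalso
        have hPzero : Pperp = 0 := by
          ext f g
          have hterm : Complex.normSq (Pperp f g) = 0 := by
            by_contra hne
            have h1 : 0 < Complex.normSq (Pperp f g) :=
              lt_of_le_of_ne (Complex.normSq_nonneg _) (Ne.symm hne)
            have h2 : Complex.normSq (Pperp f g) ≤ t := by
              calc Complex.normSq (Pperp f g)
                  ≤ ∑ g', Complex.normSq (Pperp g' g) :=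
                    Finset.single_le_sum (f := fun g' => Complex.normSq (Pperp g' g))
                      (fun x _ => Complex.normSq_nonneg _) (Finset.mem_univ f)
                _ ≤ ∑ f', ∑ g', Complex.normSq (Pperp g' f') := Finset.single_le_sum
                    (f := fun f' => ∑ g', Complex.normSq (Pperp g' f'))
                    (fun x _ => Finset.sum_nonneg fun y _ => Complex.normSq_nonneg _)
                    (Finset.mem_univ g)
                _ = t := ht.symm
            linarith
          simpa using Complex.normSq_eq_zero.1 hterm
        rw [hPzero, Matrix.zero_mul, Matrix.trace_zero] at htr
        simp at htr
    have hPSperp : PS * Pperp = 0 := by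
      rw [hPperp, mul_sub, mul_one, hproj, sub_self]
    have hAP : Atil * Pperp = -(((ε / c : ℝ) : ℂ) • (C * Pperp)) := by
      rw [hAtil, sub_mul, hPSperp, Matrix.smul_mul, zero_sub]
    have hkey : (Atil * ρUPB).trace
        = -(((t : ℝ) : ℂ)⁻¹ * (((ε / c : ℝ) : ℂ) * (Pperp * C).trace)) := by
      rw [hρ, Matrix.mul_smul, Matrix.trace_smul, htrace, hAP, Matrix.trace_neg,
        Matrix.trace_smul, Matrix.trace_mul_comm C Pperp]
      simp [smul_eq_mul]
    rw [hkey]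
    have : (-(((t : ℝ) : ℂ)⁻¹ * (((ε / c : ℝ) : ℂ) * (Pperp * C).trace))).re
        = -(t⁻¹ * (ε / c * ((Pperp * C).trace).re)) := by
      rw [Complex.neg_re, ← Complex.ofReal_inv, Complex.re_ofReal_mul,
        Complex.re_ofReal_mul]
    rw [this]
    have hdivpos : 0 < ε / c := div_pos hεpos hcpos
    have : 0 < t⁻¹ * (ε / c * ((Pperp * C).trace).re) :=
      mul_pos (inv_pos.2 htpos) (mul_pos hdivpos htr)
    linarith
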